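/- Suppose A < A₀. Then the grand canonical Hamiltonian is unbounded from below: inf{ H_{ℝ²}(φ) : φ ∈ H¹(ℝ²) } = −∞, and in particular H_{ℝ²} admits no minimizer over H¹(ℝ²). -/

import Mathlib

noncomputable section

open MeasureTheory

/-- The plane ℝ². -/
abbrev R2 : Type := EuclideanSpace ℝ (Fin 2)

/-- Squared L²(ℝ²) norm. -/
def L2sq (φ : R2 → ℝ) : ℝ := ∫ x : R2, (φ x) ^ 2

/-- L²(ℝ²) norm. -/
def L2norm (φ : R2 → ℝ) : ℝ := Real.sqrt (L2sq φ)

/-- Squared L²(ℝ²) norm of the gradient. -/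
def gradL2sq (φ : R2 → ℝ) : ℝ := ∫ x : R2, ‖fderiv ℝ φ x‖ ^ 2

/-- L²(ℝ²) norm of the gradient. -/
def gradL2norm (φ : R2 → ℝ) : ℝ := Real.sqrt (gradL2sq φ)

/-- Cubed L³(ℝ²) norm, i.e. ∫ |φ|³. -/
def L3cube (φ : R2 → ℝ) : ℝ := ∫ x : R2, |φ x| ^ 3

/-- Membership in H¹(ℝ²): φ and its gradient are square integrable (together with the
L³ integrability, which holds for every H¹(ℝ²) function by Sobolev embedding). -/
structure InH1 (φ : R2 → ℝ) : Prop where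
  diff : Differentiable ℝ φ
  memL2 : MemLp φ 2 volume
  gradMemL2 : MemLp (fun x => ‖fderiv ℝ φ x‖) 2 volume
  memL3 : MemLp φ 3 volume

/-- The Weinstein functional 𝓕(φ) = ‖∇φ‖_{L²}‖φ‖_{L²}²/‖φ‖_{L³}³. -/
def weinstein (φ : R2 → ℝ) : ℝ := gradL2norm φ * (L2norm φ) ^ 2 / L3cube φ

/-- The Laplacian on ℝ². -/
def lap (φ : R2 → ℝ) (x : R2) : ℝ :=
  ∑ i : Fin 2, fderiv ℝ (fun y => fderiv ℝ φ y (EuclideanSpace.single i 1)) x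
    (EuclideanSpace.single i 1)

/-- φ vanishes almost everywhere (i.e. φ = 0 as an element of H¹). -/
def aeZero (φ : R2 → ℝ) : Prop := φ =ᵐ[volume] fun _ => 0

/-- `Q` is a (nonzero) minimizer of the Weinstein functional over nonzero H¹(ℝ²) functions
that solves the elliptic equation ΔQ + 2Q² − 2Q = 0. -/
structure IsGNSOptimizer (Q : R2 → ℝ) : Prop where
  h1 : InH1 Q
  ne : ¬ aeZero Q
  isMin : ∀ φ : R2 → ℝ, InH1 φ → ¬ aeZero φ → weinstein Q ≤ weinstein φ
  ell : ∀ x, lap Q x + 2 * (Q x) ^ 2 - 2 * Q x = 0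

/-- The Hamiltonian H₀(φ) = (1/2)∫|∇φ|² + (σ/3)∫φ³ on ℝ². -/
def H0f (σ : ℝ) (φ : R2 → ℝ) : ℝ :=
  (1/2) * gradL2sq φ + (σ/3) * ∫ x : R2, (φ x) ^ 3

/-- The grand canonical Hamiltonian H_{ℝ²}(φ) = H₀(φ) + A(∫φ²)². -/
def HR2 (σ A : ℝ) (φ : R2 → ℝ) : ℝ :=
  H0f σ φ + A * (∫ x : R2, (φ x) ^ 2) ^ 2

/-- The set of values of H₀ on the unit L² sphere of H¹(ℝ²). -/
def sphereVals (σ : ℝ) : Set ℝ :=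
  {y | ∃ φ : R2 → ℝ, InH1 φ ∧ L2norm φ = 1 ∧ y = H0f σ φ}

/-- The critical chemical potential A₀ = −inf{H₀(φ) : φ ∈ H¹(ℝ²), ‖φ‖_{L²} = 1}. -/
def A0 (σ : ℝ) : ℝ := - sInf (sphereVals σ)

/-- The rescaled soliton Q_{q,x₀}(x) = q·Q(q^{1/2}(x − x₀)). -/
def solQ (Q : R2 → ℝ) (q : ℝ) (x₀ : R2) : R2 → ℝ :=
  fun x => q * Q (Real.sqrt q • (x - x₀))


lemma memLp_comp_smul {p : ENNReal} {f : R2 → ℝ} (hf : MemLp f p volume) {c : ℝ} (hc : c ≠ 0) :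
    MemLp (fun x => f (c • x)) p volume := by
  have hmap := MeasureTheory.Measure.map_addHaar_smul (volume : Measure R2) hc
  have h1 : MemLp f p (Measure.map (fun x : R2 => c • x) volume) := by
    rw [hmap]; exact hf.smul_measure ENNReal.ofReal_ne_top
  exact (memLp_map_measure_iff h1.aestronglyMeasurable
    (measurable_const_smul c).aemeasurable).1 h1

lemma integral_comp_sqrt_smul (f : R2 → ℝ) {μ : ℝ} (hμ : 0 < μ) :
    (∫ x : R2, f (Real.sqrt μ • x)) = μ⁻¹ * ∫ x : R2, f x := by
  rw [MeasureTheory.Measure.integral_comp_smul_of_nonneg volume f (Real.sqrt μ)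
    (hR := Real.sqrt_nonneg μ)]
  simp [finrank_euclideanSpace_fin, Real.sq_sqrt hμ.le, smul_eq_mul]

lemma fderiv_mul_comp_smul (φ : R2 → ℝ) (hφ : Differentiable ℝ φ) (μ c : ℝ) (x : R2) :
    fderiv ℝ (fun y => μ * φ (c • y)) x = (μ * c) • fderiv ℝ φ (c • x) := by
  have h1 : HasFDerivAt (fun y : R2 => c • y) (c • ContinuousLinearMap.id ℝ R2) x :=
    (hasFDerivAt_id x).const_smul c
  have h2 : HasFDerivAt (fun y : R2 => μ * φ (c • y))
      (μ • (fderiv ℝ φ (c • x)).comp (c • ContinuousLinearMap.id ℝ R2)) x :=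
    ((hφ (c • x)).hasFDerivAt.comp x h1).const_mul μ
  rw [h2.fderiv]
  ext v
  simp [smul_eq_mul, _root_.map_smul]
  ring

lemma scaled_facts (φ : R2 → ℝ) (hd : Differentiable ℝ φ) {μ : ℝ} (hμ : 0 < μ) :
    (∫ x : R2, ((fun x : R2 => μ * φ (Real.sqrt μ • x)) x) ^ 2) = μ * ∫ x : R2, (φ x) ^ 2 ∧
    (∫ x : R2, ((fun x : R2 => μ * φ (Real.sqrt μ • x)) x) ^ 3) = μ ^ 2 * ∫ x : R2, (φ x) ^ 3 ∧
    gradL2sq (fun x : R2 => μ * φ (Real.sqrt μ • x)) = μ ^ 2 * gradL2sq φ := by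
  set c := Real.sqrt μ with hcdef
  have hc : 0 < c := Real.sqrt_pos.mpr hμ
  have hc2 : c ^ 2 = μ := Real.sq_sqrt hμ.le
  refine ⟨?_, ?_, ?_⟩
  · have h1 : (fun x : R2 => ((fun x : R2 => μ * φ (c • x)) x) ^ 2)
        = fun x : R2 => μ ^ 2 * (fun y => (φ y) ^ 2) (c • x) := by funext x; ring
    rw [h1, MeasureTheory.integral_const_mul, hcdef,
      integral_comp_sqrt_smul (fun y => (φ y) ^ 2) hμ]
    field_simp
  · have h1 : (fun x : R2 => ((fun x : R2 => μ * φ (c • x)) x) ^ 3)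
        = fun x : R2 => μ ^ 3 * (fun y => (φ y) ^ 3) (c • x) := by funext x; ring
    rw [h1, MeasureTheory.integral_const_mul, hcdef,
      integral_comp_sqrt_smul (fun y => (φ y) ^ 3) hμ]
    field_simp
  · unfold gradL2sq
    have h1 : (fun x : R2 => ‖fderiv ℝ (fun y : R2 => μ * φ (c • y)) x‖ ^ 2)
        = fun x : R2 => (μ * c) ^ 2 * (fun y => ‖fderiv ℝ φ y‖ ^ 2) (c • x) := by
      funext x
      rw [fderiv_mul_comp_smul φ hd, norm_smul]
      simp [Real.norm_eq_abs, abs_of_pos hμ, abs_of_pos hc]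
      ring
    rw [h1, MeasureTheory.integral_const_mul, hcdef,
      integral_comp_sqrt_smul (fun y => ‖fderiv ℝ φ y‖ ^ 2) hμ]
    rw [mul_pow] at *
    rw [Real.sq_sqrt hμ.le]
    field_simp

lemma scaled_inH1 (φ : R2 → ℝ) (hφ : InH1 φ) {μ : ℝ} (hμ : 0 < μ) :
    InH1 (fun x : R2 => μ * φ (Real.sqrt μ • x)) := by
  have hc : 0 < Real.sqrt μ := Real.sqrt_pos.mpr hμ
  refine ⟨?_, ?_, ?_, ?_⟩
  · exact (hφ.diff.comp (differentiable_id.const_smul (Real.sqrt μ))).const_mul μ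
  · exact (memLp_comp_smul hφ.memL2 hc.ne').const_mul μ
  · have hrw : (fun x : R2 => ‖fderiv ℝ (fun y : R2 => μ * φ (Real.sqrt μ • y)) x‖)
        = fun x : R2 => (μ * Real.sqrt μ) *
          (fun y => ‖fderiv ℝ φ y‖) (Real.sqrt μ • x) := by
      funext x
      rw [fderiv_mul_comp_smul φ hφ.diff, norm_smul]
      simp [Real.norm_eq_abs, abs_of_pos hμ, abs_of_pos hc]
    rw [hrw]
    exact (memLp_comp_smul hφ.gradMemL2 hc.ne').const_mul (μ * Real.sqrt μ)
  · exact (memLp_comp_smul hφ.memL3 hc.ne').const_mul μ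


/-- Subcritical taming A < A₀: the grand canonical Hamiltonian is unbounded from below,
inf{H_{ℝ²}(φ) : φ ∈ H¹(ℝ²)} = −∞, and in particular admits no minimizer. -/
theorem statement_9 (σ A : ℝ) (hσ : σ ≠ 0)
    (hne : (sphereVals σ).Nonempty) (hbdd : BddBelow (sphereVals σ)) (hpos : 0 < A0 σ)
    (hA : A < A0 σ) :
    (∀ M : ℝ, ∃ φ : R2 → ℝ, InH1 φ ∧ HR2 σ A φ < M) ∧
    ¬ ∃ φ : R2 → ℝ, InH1 φ ∧ ∀ ψ : R2 → ℝ, InH1 ψ → HR2 σ A φ ≤ HR2 σ A ψ := by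
  have key : ∀ M : ℝ, ∃ φ : R2 → ℝ, InH1 φ ∧ HR2 σ A φ < M := by
    intro M
    have h1 : sInf (sphereVals σ) < -A := by
      unfold A0 at hA; linarith
    obtain ⟨y, hy, hyA⟩ := exists_lt_of_csInf_lt hne h1
    obtain ⟨φ, hφ, hL2, rfl⟩ := hy
    have hE : H0f σ φ + A < 0 := by linarith
    have hEneg : 0 < -(H0f σ φ + A) := by linarith
    have hL2sq : (∫ x : R2, (φ x) ^ 2) = 1 := by
      have := hL2
      unfold L2norm L2sq at this
      exact Real.sqrt_eq_one.mp this
    set μ : ℝ := max 1 ((|M| + 1) / (-(H0f σ φ + A))) with hμdef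
    have hμ1 : 1 ≤ μ := le_max_left _ _
    have hμ : 0 < μ := lt_of_lt_of_le one_pos hμ1
    obtain ⟨I2, I3, G⟩ := scaled_facts φ hφ.diff hμ
    refine ⟨fun x : R2 => μ * φ (Real.sqrt μ • x), scaled_inH1 φ hφ hμ, ?_⟩
    have hval : HR2 σ A (fun x : R2 => μ * φ (Real.sqrt μ • x))
        = μ ^ 2 * (H0f σ φ + A) := by
      unfold HR2 H0f
      rw [G, I3, I2, hL2sq]
      ring
    rw [hval]
    have hμge : (|M| + 1) / (-(H0f σ φ + A)) ≤ μ := le_max_right _ _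
    have h2 : |M| + 1 ≤ μ * (-(H0f σ φ + A)) := (div_le_iff₀ hEneg).mp hμge
    have h3 : μ ≤ μ ^ 2 := by nlinarith
    have h4 : μ * -(H0f σ φ + A) ≤ μ ^ 2 * -(H0f σ φ + A) :=
      mul_le_mul_of_nonneg_right h3 hEneg.le
    have h5 : -(μ ^ 2 * (H0f σ φ + A)) = μ ^ 2 * -(H0f σ φ + A) := by ring
    linarith [neg_abs_le M]
  refine ⟨key, ?_⟩
  rintro ⟨φ, hφ, hmin⟩
  obtain ⟨ψ, hψ, hlt⟩ := key (HR2 σ A φ)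
  exact absurd (hmin ψ hψ) (not_le.mpr hlt)
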